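/- Let σ, σ' > 0, q, q' ∈ (0, 1), and μ₀ < μ₁, μ₀' < μ₁' be real numbers. If for every y ∈ ℝ, q·φ(y; μ₀, σ) + (1 − q)·φ(y; μ₁, σ) = q'·φ(y; μ₀', σ') + (1 − q')·φ(y; μ₁', σ'), then q = q', μ₀ = μ₀', μ₁ = μ₁', and σ = σ'. That is, a proper two-component mixture of Gaussian densities with a common standard deviation and ordered means uniquely determines its weight, its two means, and its standard deviation. -/

import Mathlib

open Filter Topology

/-- The Gaussian density with mean `μ` and standard deviation `σ > 0`. -/
noncomputable def gaussDensity (μ σ y : ℝ) : ℝ :=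
  (σ * Real.sqrt (2 * Real.pi))⁻¹ * Real.exp (-(y - μ) ^ 2 / (2 * σ ^ 2))

lemma exp_lin_zero (a b : ℝ) (ha : a < 0) :
    Tendsto (fun y : ℝ => Real.exp (a * y + b)) atTop (𝓝 0) := by
  apply Real.tendsto_exp_atBot.comp
  apply tendsto_atBot_add_const_right
  exact (tendsto_const_mul_atBot_of_neg ha).mpr tendsto_id

lemma lin_atBot (a b : ℝ) (ha : a < 0) :
    Tendsto (fun y : ℝ => a * y + b) atTop atBot := by
  apply tendsto_atBot_add_const_right
  exact (tendsto_const_mul_atBot_of_neg ha).mpr tendsto_id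

lemma exp_quad_zero (a b c : ℝ) (ha : a < 0) :
    Tendsto (fun y : ℝ => Real.exp (a * y ^ 2 + b * y + c)) atTop (𝓝 0) := by
  apply Real.tendsto_exp_atBot.comp
  have h : Tendsto (fun y : ℝ => y * (a * y + b) + c) atTop atBot := by
    apply tendsto_atBot_add_const_right
    exact Tendsto.atTop_mul_atBot₀ tendsto_id (lin_atBot a b ha)
  refine h.congr (fun y => by ring)

lemma gaussA_pos (σ : ℝ) (hσ : 0 < σ) : 0 < (σ * Real.sqrt (2 * Real.pi))⁻¹ := by
  have h2π : 0 < 2 * Real.pi := by positivity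
  exact inv_pos.mpr (mul_pos hσ (Real.sqrt_pos.mpr h2π))

/-- product identity, same σ -/
lemma term_eq (σ μ ν : ℝ) (hσ : σ ≠ 0) (c y : ℝ) :
    Real.exp ((y - ν) ^ 2 / (2 * σ ^ 2)) * (c * gaussDensity μ σ y) =
      c * (σ * Real.sqrt (2 * Real.pi))⁻¹ *
        Real.exp (((μ - ν) / σ ^ 2) * y + (ν ^ 2 - μ ^ 2) / (2 * σ ^ 2)) := by
  have h2 : ((μ - ν) / σ ^ 2) * y + (ν ^ 2 - μ ^ 2) / (2 * σ ^ 2) =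
      (y - ν) ^ 2 / (2 * σ ^ 2) + -(y - μ) ^ 2 / (2 * σ ^ 2) := by
    field_simp
    ring
  rw [gaussDensity, h2, Real.exp_add]
  ring

/-- product identity, different σ -/
lemma term_eq2 (σ σ' μ ν : ℝ) (hσ : σ ≠ 0) (hσ' : σ' ≠ 0) (c y : ℝ) :
    Real.exp ((y - ν) ^ 2 / (2 * σ ^ 2)) * (c * gaussDensity μ σ' y) =
      c * (σ' * Real.sqrt (2 * Real.pi))⁻¹ *
        Real.exp ((1 / (2 * σ ^ 2) - 1 / (2 * σ' ^ 2)) * y ^ 2 +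
          (μ / σ' ^ 2 - ν / σ ^ 2) * y + (ν ^ 2 / (2 * σ ^ 2) - μ ^ 2 / (2 * σ' ^ 2))) := by
  have h2 : (1 / (2 * σ ^ 2) - 1 / (2 * σ' ^ 2)) * y ^ 2 +
      (μ / σ' ^ 2 - ν / σ ^ 2) * y + (ν ^ 2 / (2 * σ ^ 2) - μ ^ 2 / (2 * σ' ^ 2)) =
      (y - ν) ^ 2 / (2 * σ ^ 2) + -(y - μ) ^ 2 / (2 * σ' ^ 2) := by
    field_simp
    ring
  rw [gaussDensity, h2, Real.exp_add]
  ring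

lemma term_tendsto_zero (σ μ ν : ℝ) (hσ : 0 < σ) (hμν : μ < ν) (c : ℝ) :
    Tendsto (fun y => Real.exp ((y - ν) ^ 2 / (2 * σ ^ 2)) * (c * gaussDensity μ σ y))
      atTop (𝓝 0) := by
  have ha : (μ - ν) / σ ^ 2 < 0 :=
    div_neg_of_neg_of_pos (sub_neg.mpr hμν) (by positivity)
  have := (exp_lin_zero _ ((ν ^ 2 - μ ^ 2) / (2 * σ ^ 2)) ha).const_mul
    (c * (σ * Real.sqrt (2 * Real.pi))⁻¹)
  rw [mul_zero] at this
  refine this.congr fun y => (term_eq σ μ ν hσ.ne' c y).symm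

lemma term_tendsto_self (σ ν : ℝ) (hσ : 0 < σ) (c : ℝ) :
    Tendsto (fun y => Real.exp ((y - ν) ^ 2 / (2 * σ ^ 2)) * (c * gaussDensity ν σ y))
      atTop (𝓝 (c * (σ * Real.sqrt (2 * Real.pi))⁻¹)) := by
  have h : ∀ y : ℝ, Real.exp ((y - ν) ^ 2 / (2 * σ ^ 2)) * (c * gaussDensity ν σ y) =
      c * (σ * Real.sqrt (2 * Real.pi))⁻¹ := by
    intro y
    rw [term_eq σ ν ν hσ.ne' c y]
    simp
  exact tendsto_const_nhds.congr fun y => (h y).symm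

lemma term_tendsto_zero2 (σ σ' μ ν : ℝ) (hσ' : 0 < σ') (hlt : σ' < σ) (c : ℝ) :
    Tendsto (fun y => Real.exp ((y - ν) ^ 2 / (2 * σ ^ 2)) * (c * gaussDensity μ σ' y))
      atTop (𝓝 0) := by
  have hσ : 0 < σ := hσ'.trans hlt
  have ha : 1 / (2 * σ ^ 2) - 1 / (2 * σ' ^ 2) < 0 := by
    have : (2 : ℝ) * σ' ^ 2 < 2 * σ ^ 2 := by nlinarith
    have h1 : 1 / (2 * σ ^ 2) < 1 / (2 * σ' ^ 2) :=
      one_div_lt_one_div_of_lt (by positivity) this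
    linarith
  have := (exp_quad_zero _ (μ / σ' ^ 2 - ν / σ ^ 2)
      (ν ^ 2 / (2 * σ ^ 2) - μ ^ 2 / (2 * σ' ^ 2)) ha).const_mul
    (c * (σ' * Real.sqrt (2 * Real.pi))⁻¹)
  rw [mul_zero] at this
  refine this.congr fun y => (term_eq2 σ σ' μ ν hσ.ne' hσ'.ne' c y).symm

lemma sigma_not_lt
    (σ σ' : ℝ) (hσ : 0 < σ) (hσ' : 0 < σ')
    (q q' : ℝ) (hq : q ∈ Set.Ioo (0 : ℝ) 1)
    (μ₀ μ₁ μ₀' μ₁' : ℝ) (hμ : μ₀ < μ₁)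
    (heq : ∀ y : ℝ,
      q * gaussDensity μ₀ σ y + (1 - q) * gaussDensity μ₁ σ y =
        q' * gaussDensity μ₀' σ' y + (1 - q') * gaussDensity μ₁' σ' y) :
    ¬ σ' < σ := by
  intro hlt
  have hL : Tendsto (fun y => Real.exp ((y - μ₁) ^ 2 / (2 * σ ^ 2)) *
      (q * gaussDensity μ₀ σ y + (1 - q) * gaussDensity μ₁ σ y)) atTop
      (𝓝 (0 + (1 - q) * (σ * Real.sqrt (2 * Real.pi))⁻¹)) := by
    simp only [mul_add]
    exact (term_tendsto_zero σ μ₀ μ₁ hσ hμ q).add (term_tendsto_self σ μ₁ hσ (1 - q))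
  have hR : Tendsto (fun y => Real.exp ((y - μ₁) ^ 2 / (2 * σ ^ 2)) *
      (q * gaussDensity μ₀ σ y + (1 - q) * gaussDensity μ₁ σ y)) atTop
      (𝓝 (0 + 0)) := by
    simp only [heq, mul_add]
    exact (term_tendsto_zero2 σ σ' μ₀' μ₁ hσ' hlt q').add
      (term_tendsto_zero2 σ σ' μ₁' μ₁ hσ' hlt (1 - q'))
  have h := tendsto_nhds_unique hL hR
  have hA := gaussA_pos σ hσ
  have h1q : 0 < 1 - q := by linarith [hq.2]
  nlinarith

lemma mu1_not_lt
    (σ : ℝ) (hσ : 0 < σ)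
    (q q' : ℝ) (hq : q ∈ Set.Ioo (0 : ℝ) 1)
    (μ₀ μ₁ μ₀' μ₁' : ℝ) (hμ : μ₀ < μ₁) (hμ' : μ₀' < μ₁')
    (heq : ∀ y : ℝ,
      q * gaussDensity μ₀ σ y + (1 - q) * gaussDensity μ₁ σ y =
        q' * gaussDensity μ₀' σ y + (1 - q') * gaussDensity μ₁' σ y) :
    ¬ μ₁' < μ₁ := by
  intro hlt
  have hL : Tendsto (fun y => Real.exp ((y - μ₁) ^ 2 / (2 * σ ^ 2)) *
      (q * gaussDensity μ₀ σ y + (1 - q) * gaussDensity μ₁ σ y)) atTop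
      (𝓝 (0 + (1 - q) * (σ * Real.sqrt (2 * Real.pi))⁻¹)) := by
    simp only [mul_add]
    exact (term_tendsto_zero σ μ₀ μ₁ hσ hμ q).add (term_tendsto_self σ μ₁ hσ (1 - q))
  have hR : Tendsto (fun y => Real.exp ((y - μ₁) ^ 2 / (2 * σ ^ 2)) *
      (q * gaussDensity μ₀ σ y + (1 - q) * gaussDensity μ₁ σ y)) atTop
      (𝓝 (0 + 0)) := by
    simp only [heq, mul_add]
    exact (term_tendsto_zero σ μ₀' μ₁ hσ (hμ'.trans hlt) q').add
      (term_tendsto_zero σ μ₁' μ₁ hσ hlt (1 - q'))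
  have h := tendsto_nhds_unique hL hR
  have hA := gaussA_pos σ hσ
  have h1q : 0 < 1 - q := by linarith [hq.2]
  nlinarith

/-- A proper two-component mixture of Gaussian densities with a common standard deviation
and ordered means uniquely determines its weight, its two means, and its standard
deviation. -/
theorem two_component_gaussian_mixture_identifiable
    (σ σ' : ℝ) (hσ : 0 < σ) (hσ' : 0 < σ')
    (q q' : ℝ) (hq : q ∈ Set.Ioo (0 : ℝ) 1) (hq' : q' ∈ Set.Ioo (0 : ℝ) 1)
    (μ₀ μ₁ μ₀' μ₁' : ℝ) (hμ : μ₀ < μ₁) (hμ' : μ₀' < μ₁')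
    (heq : ∀ y : ℝ,
      q * gaussDensity μ₀ σ y + (1 - q) * gaussDensity μ₁ σ y =
        q' * gaussDensity μ₀' σ' y + (1 - q') * gaussDensity μ₁' σ' y) :
    q = q' ∧ μ₀ = μ₀' ∧ μ₁ = μ₁' ∧ σ = σ' := by
  have heq' : ∀ y : ℝ,
      q' * gaussDensity μ₀' σ' y + (1 - q') * gaussDensity μ₁' σ' y =
        q * gaussDensity μ₀ σ y + (1 - q) * gaussDensity μ₁ σ y := fun y => (heq y).symm
  -- σ = σ'
  have hσσ : σ = σ' := le_antisymm
    (not_lt.mp (sigma_not_lt σ σ' hσ hσ' q q' hq μ₀ μ₁ μ₀' μ₁' hμ heq))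
    (not_lt.mp (sigma_not_lt σ' σ hσ' hσ q' q hq' μ₀' μ₁' μ₀ μ₁ hμ' heq'))
  subst hσσ
  -- μ₁ = μ₁'
  have hμ₁ : μ₁ = μ₁' := le_antisymm
    (not_lt.mp (mu1_not_lt σ hσ q q' hq μ₀ μ₁ μ₀' μ₁' hμ hμ' heq))
    (not_lt.mp (mu1_not_lt σ hσ q' q hq' μ₀' μ₁' μ₀ μ₁ hμ' hμ heq'))
  subst hμ₁
  have hA := gaussA_pos σ hσ
  -- q = q'
  have hqq : q = q' := by
    have hL : Tendsto (fun y => Real.exp ((y - μ₁) ^ 2 / (2 * σ ^ 2)) *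
        (q * gaussDensity μ₀ σ y + (1 - q) * gaussDensity μ₁ σ y)) atTop
        (𝓝 (0 + (1 - q) * (σ * Real.sqrt (2 * Real.pi))⁻¹)) := by
      simp only [mul_add]
      exact (term_tendsto_zero σ μ₀ μ₁ hσ hμ q).add (term_tendsto_self σ μ₁ hσ (1 - q))
    have hR : Tendsto (fun y => Real.exp ((y - μ₁) ^ 2 / (2 * σ ^ 2)) *
        (q * gaussDensity μ₀ σ y + (1 - q) * gaussDensity μ₁ σ y)) atTop
        (𝓝 (0 + (1 - q') * (σ * Real.sqrt (2 * Real.pi))⁻¹)) := by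
      simp only [heq, mul_add]
      exact (term_tendsto_zero σ μ₀' μ₁ hσ hμ' q').add (term_tendsto_self σ μ₁ hσ (1 - q'))
    have h := tendsto_nhds_unique hL hR
    have := mul_right_cancel₀ hA.ne' (by linarith : (1 - q) * (σ * Real.sqrt (2 * Real.pi))⁻¹ = (1 - q') * (σ * Real.sqrt (2 * Real.pi))⁻¹)
    linarith
  subst hqq
  refine ⟨rfl, ?_, rfl, rfl⟩
  -- μ₀ = μ₀'
  have h0 : gaussDensity μ₀ σ μ₀ = gaussDensity μ₀' σ μ₀ := by
    have h := heq μ₀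
    have h2 : q * gaussDensity μ₀ σ μ₀ = q * gaussDensity μ₀' σ μ₀ := by linarith
    exact mul_left_cancel₀ (ne_of_gt hq.1) h2
  rw [gaussDensity, gaussDensity] at h0
  have h3 := mul_left_cancel₀ hA.ne' h0
  have h4 := Real.exp_injective h3
  have h5 : (μ₀ - μ₀') ^ 2 = 0 := by
    field_simp at h4
    nlinarith
  have := pow_eq_zero_iff (n := 2) (by norm_num) |>.mp h5
  linarith [sub_eq_zero.mp this]
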